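/- arXiv:0903.3525 — 5 statements merged into one kernel-verified Lean document; each statement's English description precedes it below -/
import Mathlib

section
/- Let a, δ, ε, ξ be real numbers with a > 0, δ ≥ 0, ε ≥ 0, 0 ≤ ξ ≤ ε, and δ + ε/a ≤ 0.277. Then a - ξ > 0, the quantity (a·δ + ε - ξ)/(a - ξ) lies in [0, 1/2], and (a - ξ)·(1 - h((a·δ + ε - ξ)/(a - ξ))) ≥ a·(1 - h(δ + ε/a)). -/
/-- Binary Shannon entropy to base 2: `h(p) = -p·log₂ p - (1-p)·log₂(1-p)`,
with the convention `log₂ 0 = 0`, so that `h 0 = h 1 = 0`. -/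
noncomputable def binEnt (p : ℝ) : ℝ := -p * Real.logb 2 p - (1 - p) * Real.logb 2 (1 - p)

noncomputable def auxF (d m : ℝ) : ℝ := m * Real.log 2 + m * Real.log m - (m + d) * Real.log (m + d)

lemma auxF_anti {d : ℝ} (hd : 0 < d) : StrictAntiOn (auxF d) (Set.Icc 0 d) := by
  have hcont : ContinuousOn (auxF d) (Set.Icc 0 d) := by
    apply Continuous.continuousOn
    have h1 : Continuous fun m : ℝ => m * Real.log m := Real.continuous_mul_log
    have h2 : Continuous fun m : ℝ => (m + d) * Real.log (m + d) :=
      Real.continuous_mul_log.comp (continuous_id.add continuous_const)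
    exact ((continuous_id.mul continuous_const).add h1).sub h2
  apply strictAntiOn_of_deriv_neg (convex_Icc 0 d) hcont
  intro x hx
  rw [interior_Icc] at hx
  obtain ⟨hx0, hxd⟩ := hx
  have hD : HasDerivAt (auxF d) (Real.log 2 + (Real.log x + 1) - (Real.log (x + d) + 1)) x := by
    have h1 : HasDerivAt (fun m : ℝ => m * Real.log 2) (Real.log 2) x := hasDerivAt_mul_const _
    have h2 : HasDerivAt (fun m : ℝ => m * Real.log m) (Real.log x + 1) x :=
      Real.hasDerivAt_mul_log (ne_of_gt hx0)
    have h3 : HasDerivAt (fun m : ℝ => (m + d) * Real.log (m + d)) (Real.log (x + d) + 1) x := by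
      have hin : HasDerivAt (fun m : ℝ => m + d) 1 x := (hasDerivAt_id x).add_const d
      have hout : HasDerivAt (fun u : ℝ => u * Real.log u) (Real.log (x + d) + 1) (x + d) :=
        Real.hasDerivAt_mul_log (by positivity)
      simpa [Function.comp_def] using hout.comp x hin
    exact (h1.add h2).sub h3
  rw [hD.deriv]
  have h2x : Real.log 2 + Real.log x = Real.log (2 * x) := (Real.log_mul two_ne_zero (ne_of_gt hx0)).symm
  have hlt : Real.log (2 * x) < Real.log (x + d) := by
    apply Real.log_lt_log (by positivity)
    linarith
  linarith

lemma scaled_ent {d m : ℝ} (hd : 0 < d) (hm : 0 ≤ m) :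
    (m + d) * binEnt (m / (m + d)) * Real.log 2
      = (m + d) * Real.log (m + d) - m * Real.log m - d * Real.log d := by
  have hmd : 0 < m + d := by linarith
  rcases eq_or_lt_of_le hm with h0 | h0
  · subst h0
    simp [binEnt, Real.logb]
  · have hp : (0:ℝ) < m / (m + d) := by positivity
    have h1p : 1 - m / (m + d) = d / (m + d) := by field_simp; ring
    have hlogp : Real.log (m / (m + d)) = Real.log m - Real.log (m + d) :=
      Real.log_div (ne_of_gt h0) (ne_of_gt hmd)
    have hlogq : Real.log (d / (m + d)) = Real.log d - Real.log (m + d) :=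
      Real.log_div (ne_of_gt hd) (ne_of_gt hmd)
    have hl2 : Real.log 2 ≠ 0 := ne_of_gt (Real.log_pos one_lt_two)
    rw [binEnt, h1p, Real.logb, Real.logb, hlogp, hlogq]
    field_simp
    ring

theorem leakage_entropy_bound (a δ ε ξ : ℝ)
    (ha : 0 < a) (hδ : 0 ≤ δ) (hε : 0 ≤ ε) (hξ0 : 0 ≤ ξ) (hξε : ξ ≤ ε)
    (hbound : δ + ε / a ≤ 0.277) :
    0 < a - ξ ∧
    0 ≤ (a * δ + ε - ξ) / (a - ξ) ∧
    (a * δ + ε - ξ) / (a - ξ) ≤ 1 / 2 ∧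
    (a - ξ) * (1 - binEnt ((a * δ + ε - ξ) / (a - ξ))) ≥ a * (1 - binEnt (δ + ε / a)) := by
  set M : ℝ := a * δ + ε with hM
  have hMt : M = a * (δ + ε / a) := by field_simp [hM]; ring
  have hM277 : M ≤ 0.277 * a := by
    rw [hMt]
    calc a * (δ + ε / a) ≤ a * 0.277 := by
          exact mul_le_mul_of_nonneg_left hbound (le_of_lt ha)
      _ = 0.277 * a := mul_comm _ _
  have hMε : ε ≤ M := by nlinarith
  have hξM : ξ ≤ M := le_trans hξε hMε
  have hM0 : 0 ≤ M := le_trans hε hMε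
  have haξ : 0 < a - ξ := by nlinarith
  set d : ℝ := a - M with hd
  have hd0 : 0 < d := by rw [hd]; nlinarith
  have hMd : M ≤ d := by rw [hd]; nlinarith
  set m : ℝ := M - ξ with hm
  have hm0 : 0 ≤ m := by rw [hm]; linarith
  have hmM : m ≤ M := by rw [hm]; linarith
  have hden : a - ξ = m + d := by rw [hm, hd]; ring
  refine ⟨haξ, ?_, ?_, ?_⟩
  · apply div_nonneg _ (le_of_lt haξ); linarith
  · rw [div_le_iff₀ haξ]; nlinarith
  · -- main inequality
    have hFanti : auxF d M ≤ auxF d m := by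
      rcases eq_or_lt_of_le hmM with h | h
      · rw [h]
      · exact le_of_lt ((auxF_anti hd0) ⟨hm0, le_trans hmM hMd⟩ ⟨le_trans hm0 (le_of_lt h), hMd⟩ h)
    have hεa : δ + ε / a = M / (M + d) := by
      have : M + d = a := by rw [hd]; ring
      rw [this, hMt]; field_simp
    have hl2 : 0 < Real.log 2 := Real.log_pos (by norm_num)
    have hMa : a = M + d := by rw [hd]; ring
    rw [ge_iff_le, hεa, hden, hMa]
    have key : ∀ x : ℝ, 0 ≤ x → (x + d) * (1 - binEnt (x / (x + d))) * Real.log 2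
        = auxF d x + d * Real.log 2 + d * Real.log d := by
      intro x hx
      have := scaled_ent hd0 hx
      rw [auxF]
      nlinarith [this]
    have h1 := key m hm0
    have h2 := key M hM0
    refine le_of_mul_le_mul_right ?_ hl2
    rw [h1, h2]
    linarith
end

section
/- Let J be a finite index set, and let p_j ≥ 0 (j ∈ J) with ∑_j p_j = 1, and let α_j, β_j ∈ [0,1] satisfy (1 - 2α_j)² + (1 - 2β_j)² ≤ 1 for every j ∈ J. Then 1 - 2·∑_j p_j·α_j ≤ ∑_j 2·p_j·√(β_j·(1 - β_j)). -/
theorem statistical_estimate {J : Type*} [Fintype J] (p α β : J → ℝ)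
    (hp : ∀ j, 0 ≤ p j) (hpsum : ∑ j, p j = 1)
    (hα0 : ∀ j, 0 ≤ α j) (hα1 : ∀ j, α j ≤ 1)
    (hβ0 : ∀ j, 0 ≤ β j) (hβ1 : ∀ j, β j ≤ 1)
    (hcompl : ∀ j, (1 - 2 * α j) ^ 2 + (1 - 2 * β j) ^ 2 ≤ 1) :
    1 - 2 * ∑ j, p j * α j ≤ ∑ j, 2 * p j * Real.sqrt (β j * (1 - β j)) := by
  have key : ∀ j, 1 - 2 * α j ≤ 2 * Real.sqrt (β j * (1 - β j)) := by
    intro j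
    have h1 : (1 - 2 * α j) ^ 2 ≤ 4 * (β j * (1 - β j)) := by nlinarith [hcompl j]
    calc 1 - 2 * α j ≤ Real.sqrt ((1 - 2 * α j) ^ 2) := by
          rw [Real.sqrt_sq_eq_abs]; exact le_abs_self _
      _ ≤ Real.sqrt (4 * (β j * (1 - β j))) := Real.sqrt_le_sqrt h1
      _ = 2 * Real.sqrt (β j * (1 - β j)) := by
          rw [show (4:ℝ) = 2^2 by norm_num, Real.sqrt_mul (by positivity), Real.sqrt_sq (by norm_num)]
  have : 1 - 2 * ∑ j, p j * α j = ∑ j, p j * (1 - 2 * α j) := by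
    simp only [mul_sub, mul_one, Finset.sum_sub_distrib, hpsum, Finset.mul_sum]
    congr 1
    exact Finset.sum_congr rfl fun j _ => by ring
  rw [this]
  apply Finset.sum_le_sum
  intro j _
  have := mul_le_mul_of_nonneg_left (key j) (hp j)
  linarith
end

section
/- Let q_X, δ_X, q_ph, δ_ph ∈ [0,1] and Δ ∈ ℝ. Suppose there are nonnegative reals p_0, p_1, p_2 and reals α_j, β_j ∈ [0,1] (j = 0,1,2) such that: ∑_j p_j·α_j = Δ; (1-2α_j)² + (1-2β_j)² ≤ 1 for each j; 2p_0·β_0 = q_ph·(1-δ_ph), 2p_1·β_1 = q_ph·δ_ph, 2p_2·β_2 = 1-q_ph; and 2p_0·(1-β_0) = q_X·(1-δ_X), 2p_1·(1-β_1) = q_X·δ_X, 2p_2·(1-β_2) = 1-q_X. Then 1 - 2Δ ≤ √(q_X·(1-δ_X)·q_ph·(1-δ_ph)) + √(q_X·δ_X·q_ph·δ_ph) + √((1-q_X)·(1-q_ph)). -/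
lemma key_step (p a b : ℝ) (hp : 0 ≤ p)
    (hc : (1 - 2 * a) ^ 2 + (1 - 2 * b) ^ 2 ≤ 1) :
    p * (1 - 2 * a) ≤ Real.sqrt ((2 * p * b) * (2 * p * (1 - b))) := by
  have h1 : (p * (1 - 2 * a)) ^ 2 ≤ (2 * p * b) * (2 * p * (1 - b)) := by
    have h2 : (1 - 2 * a) ^ 2 ≤ 4 * b * (1 - b) := by nlinarith
    nlinarith [sq_nonneg p, sq_nonneg (1 - 2 * a)]
  calc p * (1 - 2 * a) ≤ |p * (1 - 2 * a)| := le_abs_self _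
    _ = Real.sqrt ((p * (1 - 2 * a)) ^ 2) := (Real.sqrt_sq_eq_abs _).symm
    _ ≤ _ := Real.sqrt_le_sqrt h1

theorem phase_error_bound (qX δX qph δph Δ : ℝ)
    (hqX0 : 0 ≤ qX) (hqX1 : qX ≤ 1) (hδX0 : 0 ≤ δX) (hδX1 : δX ≤ 1)
    (hqph0 : 0 ≤ qph) (hqph1 : qph ≤ 1) (hδph0 : 0 ≤ δph) (hδph1 : δph ≤ 1)
    (p α β : Fin 3 → ℝ)
    (hp : ∀ j, 0 ≤ p j)
    (hα0 : ∀ j, 0 ≤ α j) (hα1 : ∀ j, α j ≤ 1)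
    (hβ0 : ∀ j, 0 ≤ β j) (hβ1 : ∀ j, β j ≤ 1)
    (hΔ : ∑ j, p j * α j = Δ)
    (hcompl : ∀ j, (1 - 2 * α j) ^ 2 + (1 - 2 * β j) ^ 2 ≤ 1)
    (h0Z : 2 * p 0 * β 0 = qph * (1 - δph))
    (h1Z : 2 * p 1 * β 1 = qph * δph)
    (h2Z : 2 * p 2 * β 2 = 1 - qph)
    (h0X : 2 * p 0 * (1 - β 0) = qX * (1 - δX))
    (h1X : 2 * p 1 * (1 - β 1) = qX * δX)
    (h2X : 2 * p 2 * (1 - β 2) = 1 - qX) :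
    1 - 2 * Δ ≤ Real.sqrt (qX * (1 - δX) * (qph * (1 - δph)))
      + Real.sqrt (qX * δX * (qph * δph))
      + Real.sqrt ((1 - qX) * (1 - qph)) := by
  have hΔ' : p 0 * α 0 + p 1 * α 1 + p 2 * α 2 = Δ := by
    rw [← hΔ, Fin.sum_univ_three]
  have hsum : p 0 + p 1 + p 2 = 1 := by nlinarith
  have k0 := key_step (p 0) (α 0) (β 0) (hp 0) (hcompl 0)
  have k1 := key_step (p 1) (α 1) (β 1) (hp 1) (hcompl 1)
  have k2 := key_step (p 2) (α 2) (β 2) (hp 2) (hcompl 2)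
  rw [h0Z, h0X] at k0; rw [h1Z, h1X] at k1; rw [h2Z, h2X] at k2
  have e0 : qph * (1 - δph) * (qX * (1 - δX)) = qX * (1 - δX) * (qph * (1 - δph)) := by ring
  have e1 : qph * δph * (qX * δX) = qX * δX * (qph * δph) := by ring
  have e2 : (1 - qph) * (1 - qX) = (1 - qX) * (1 - qph) := by ring
  rw [e0] at k0; rw [e1] at k1; rw [e2] at k2
  linarith
end

section
/- Let n ≥ 1, let E be an n×n complex positive semidefinite matrix with I - E also positive semidefinite, and let Q be a nonzero subspace of ℂⁿ (with the standard inner product). Let λ = inf{⟨Φ, EΦ⟩ : Φ ∈ Q, ‖Φ‖ = 1}, and let √E denote the unique positive semidefinite square root of E. Then there exists a linear map R : ℂⁿ → ℂⁿ with operator norm ‖R‖ ≤ 1 such that R(√E · Φ) = √λ · Φ for every Φ ∈ Q. -/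
open scoped ComplexOrder

/-- The square root of a positive semidefinite matrix, as `Matrix.PosSemidef.sqrt` was defined
in the older Mathlib (removed since). -/
noncomputable def Matrix.PosSemidef.sqrt {n : Type*} [Fintype n] [DecidableEq n]
    {A : Matrix n n ℂ} (hA : A.PosSemidef) : Matrix n n ℂ :=
  (hA.1.eigenvectorUnitary : Matrix n n ℂ) *
    Matrix.diagonal (fun i => ((√(hA.1.eigenvalues i) : ℝ) : ℂ)) *
    (star hA.1.eigenvectorUnitary : Matrix n n ℂ)

theorem Matrix.PosSemidef.sqrt_isHermitian' {n : Type*} [Fintype n] [DecidableEq n]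
    {A : Matrix n n ℂ} (hA : A.PosSemidef) : hA.sqrt.IsHermitian := by
  unfold Matrix.PosSemidef.sqrt
  simp only [Matrix.IsHermitian, Matrix.conjTranspose_mul, Matrix.diagonal_conjTranspose,
    Matrix.star_eq_conjTranspose, Matrix.conjTranspose_conjTranspose, Matrix.mul_assoc]
  congr 2
  ext i j
  simp [Matrix.diagonal_apply]

theorem Matrix.PosSemidef.sqrt_mul_self' {n : Type*} [Fintype n] [DecidableEq n]
    {A : Matrix n n ℂ} (hA : A.PosSemidef) : hA.sqrt * hA.sqrt = A := by
  conv_rhs => rw [hA.1.spectral_theorem]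
  unfold Matrix.PosSemidef.sqrt
  have hU : (star hA.1.eigenvectorUnitary : Matrix n n ℂ) * (hA.1.eigenvectorUnitary : Matrix n n ℂ) = 1 :=
    Unitary.coe_star_mul_self _
  simp only [Unitary.conjStarAlgAut_apply, Matrix.mul_assoc]
  rw [← Matrix.mul_assoc (star _ : Matrix n n ℂ) (hA.1.eigenvectorUnitary : Matrix n n ℂ), hU,
    Matrix.one_mul, ← Matrix.mul_assoc (Matrix.diagonal _), Matrix.diagonal_mul_diagonal]
  congr 2
  ext i j
  simp only [Matrix.diagonal_apply, Function.comp_apply]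
  split_ifs
  · rw [← Complex.ofReal_mul, Real.mul_self_sqrt (hA.eigenvalues_nonneg _)]; rfl
  · rfl

/-- Koashi–Ueda measurement reversal (existence part): for a POVM element
`0 ≤ E ≤ I` with state change `Φ ↦ √E·Φ`, there is a contraction `R` reversing
the measurement on the subspace `Q` with joint success probability
`λ = inf {⟨Φ, EΦ⟩ : Φ ∈ Q, ‖Φ‖ = 1}`. -/
theorem koashi_ueda_reversal_exists (n : ℕ) (hn : 1 ≤ n)
    (E : Matrix (Fin n) (Fin n) ℂ) (hE : E.PosSemidef) (hIE : (1 - E).PosSemidef)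
    (Q : Submodule ℂ (EuclideanSpace ℂ (Fin n))) (hQ : Q ≠ ⊥)
    (lam : ℝ)
    (hlam : lam = sInf {r : ℝ | ∃ Φ ∈ Q, ‖Φ‖ = 1 ∧
      ((inner ℂ Φ (Matrix.toEuclideanLin E Φ) : ℂ)).re = r}) :
    ∃ R : EuclideanSpace ℂ (Fin n) →L[ℂ] EuclideanSpace ℂ (Fin n),
      ‖R‖ ≤ 1 ∧ ∀ Φ ∈ Q, R (Matrix.toEuclideanLin hE.sqrt Φ) = (Real.sqrt lam : ℂ) • Φ := by
  classical
  set S : EuclideanSpace ℂ (Fin n) →ₗ[ℂ] EuclideanSpace ℂ (Fin n) :=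
    Matrix.toEuclideanLin hE.sqrt with hSdef
  have hSsym : S.IsSymmetric :=
    Matrix.isHermitian_iff_isSymmetric.mp hE.sqrt_isHermitian'
  have hcomp : ∀ Φ, Matrix.toEuclideanLin E Φ = S (S Φ) := by
    intro Φ
    rw [← hE.sqrt_mul_self']
    simp [hSdef, Matrix.toEuclideanLin_apply, Matrix.mulVec_mulVec]
  have key : ∀ Φ : EuclideanSpace ℂ (Fin n),
      ((inner ℂ Φ (Matrix.toEuclideanLin E Φ) : ℂ)).re = ‖S Φ‖ ^ 2 := by
    intro Φ
    rw [hcomp, ← hSsym Φ (S Φ)]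
    exact inner_self_eq_norm_sq (𝕜 := ℂ) (S Φ)
  by_cases hl : lam ≤ 0
  · refine ⟨0, by rw [norm_zero]; exact zero_le_one, ?_⟩
    intro Φ _
    have : Real.sqrt lam = 0 := Real.sqrt_eq_zero'.mpr hl
    simp [this]
  push_neg at hl
  -- main inequality
  have hmain : ∀ Φ ∈ Q, Real.sqrt lam * ‖Φ‖ ≤ ‖S Φ‖ := by
    intro Φ hΦ
    rcases eq_or_ne Φ 0 with h0 | h0
    · simp [h0]
    · have hc : (0:ℝ) < ‖Φ‖ := norm_pos_iff.mpr h0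
      set Ψ : EuclideanSpace ℂ (Fin n) := ((‖Φ‖⁻¹ : ℝ) : ℂ) • Φ with hΨ
      have hΨQ : Ψ ∈ Q := Q.smul_mem _ hΦ
      have hΨn : ‖Ψ‖ = 1 := by
        simp [hΨ, norm_smul, abs_of_pos (inv_pos.mpr hc), inv_mul_cancel₀ hc.ne']
      have hbdd : BddBelow {r : ℝ | ∃ Φ ∈ Q, ‖Φ‖ = 1 ∧
          ((inner ℂ Φ (Matrix.toEuclideanLin E Φ) : ℂ)).re = r} := by
        refine ⟨0, ?_⟩
        rintro r ⟨Φ', _, _, rfl⟩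
        rw [key]
        positivity
      have hle : lam ≤ ((inner ℂ Ψ (Matrix.toEuclideanLin E Ψ) : ℂ)).re := by
        rw [hlam]
        exact csInf_le hbdd ⟨Ψ, hΨQ, hΨn, rfl⟩
      rw [key] at hle
      have hSψ : ‖S Ψ‖ = ‖Φ‖⁻¹ * ‖S Φ‖ := by
        simp [hΨ, map_smul, norm_smul, abs_of_pos (inv_pos.mpr hc)]
      have h1 : lam * ‖Φ‖ ^ 2 ≤ ‖S Φ‖ ^ 2 := by
        rw [hSψ] at hle
        have := mul_le_mul_of_nonneg_left hle (le_of_lt (by positivity : (0:ℝ) < ‖Φ‖ ^ 2))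
        calc lam * ‖Φ‖ ^ 2 = ‖Φ‖ ^ 2 * lam := by ring
        _ ≤ ‖Φ‖ ^ 2 * (‖Φ‖⁻¹ * ‖S Φ‖) ^ 2 := this
        _ = ‖S Φ‖ ^ 2 := by
            field_simp
      calc Real.sqrt lam * ‖Φ‖ = Real.sqrt (lam * ‖Φ‖ ^ 2) := by
            rw [Real.sqrt_mul hl.le, Real.sqrt_sq hc.le]
        _ ≤ Real.sqrt (‖S Φ‖ ^ 2) := Real.sqrt_le_sqrt h1
        _ = ‖S Φ‖ := Real.sqrt_sq (norm_nonneg _)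
  set W : Submodule ℂ (EuclideanSpace ℂ (Fin n)) := Q.map S with hWdef
  have hsl : (0:ℝ) < Real.sqrt lam := Real.sqrt_pos.mpr hl
  have hinj : Function.Injective (S.submoduleMap Q) := by
    rw [injective_iff_map_eq_zero]
    intro x hx
    have hx0 : S (x : EuclideanSpace ℂ (Fin n)) = 0 := by
      have := congrArg (Subtype.val) hx
      simpa using this
    have := hmain x x.2
    rw [hx0, norm_zero] at this
    have : ‖(x : EuclideanSpace ℂ (Fin n))‖ = 0 := by nlinarith [norm_nonneg (x : EuclideanSpace ℂ (Fin n))]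
    exact Subtype.ext (norm_eq_zero.mp this)
  set e : Q ≃ₗ[ℂ] W :=
    LinearEquiv.ofBijective (S.submoduleMap Q) ⟨hinj, S.submoduleMap_surjective Q⟩ with hedef
  have he_coe : ∀ x : Q, ((e x : W) : EuclideanSpace ℂ (Fin n)) = S x := fun x => rfl
  set Rlin : EuclideanSpace ℂ (Fin n) →ₗ[ℂ] EuclideanSpace ℂ (Fin n) :=
    Q.subtype ∘ₗ ((Real.sqrt lam : ℂ) •
      (e.symm.toLinearMap ∘ₗ (W.orthogonalProjectionOnto).toLinearMap)) with hRdef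
  have hRapp : ∀ x, Rlin x =
      (Real.sqrt lam : ℂ) • ((e.symm (W.orthogonalProjectionOnto x) : Q) : EuclideanSpace ℂ (Fin n)) := by
    intro x; rfl
  refine ⟨LinearMap.toContinuousLinearMap Rlin, ?_, ?_⟩
  · refine ContinuousLinearMap.opNorm_le_bound _ zero_le_one ?_
    intro x
    rw [one_mul]
    have : (LinearMap.toContinuousLinearMap Rlin) x = Rlin x := rfl
    rw [this, hRapp]
    set u := W.orthogonalProjectionOnto x with hu
    set Φ := e.symm u with hΦ
    have heΦ : S (Φ : EuclideanSpace ℂ (Fin n)) = (u : EuclideanSpace ℂ (Fin n)) := by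
      rw [← he_coe Φ, hΦ, e.apply_symm_apply]
    have h1 : ‖(Real.sqrt lam : ℂ) • ((Φ : Q) : EuclideanSpace ℂ (Fin n))‖
        = Real.sqrt lam * ‖(Φ : EuclideanSpace ℂ (Fin n))‖ := by
      rw [norm_smul]
      simp [abs_of_pos hsl]
    rw [h1]
    have h2 : Real.sqrt lam * ‖(Φ : EuclideanSpace ℂ (Fin n))‖ ≤ ‖(u : EuclideanSpace ℂ (Fin n))‖ := by
      rw [← heΦ]
      exact hmain _ Φ.2
    have h3 : ‖(u : EuclideanSpace ℂ (Fin n))‖ ≤ ‖x‖ := by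
      have := (W.orthogonalProjectionOnto).le_opNorm x
      have hP := W.orthogonalProjectionOnto_norm_le
      calc ‖(u : EuclideanSpace ℂ (Fin n))‖ = ‖u‖ := rfl
        _ ≤ ‖W.orthogonalProjectionOnto‖ * ‖x‖ := this
        _ ≤ 1 * ‖x‖ := by
            exact mul_le_mul_of_nonneg_right hP (norm_nonneg x)
        _ = ‖x‖ := one_mul _
    exact h2.trans h3
  · intro Φ hΦ
    have hmem : S Φ ∈ W := Submodule.mem_map_of_mem hΦ
    have hproj : ((W.orthogonalProjectionOnto (S Φ) : W) : EuclideanSpace ℂ (Fin n)) = S Φ :=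
      W.starProjection_eq_self_iff.mpr hmem
    have hproj' : W.orthogonalProjectionOnto (S Φ) = ⟨S Φ, hmem⟩ := Subtype.ext hproj
    have hsymm : e.symm ⟨S Φ, hmem⟩ = ⟨Φ, hΦ⟩ := by
      rw [LinearEquiv.symm_apply_eq]
      exact Subtype.ext (he_coe ⟨Φ, hΦ⟩).symm
    have : (LinearMap.toContinuousLinearMap Rlin) (S Φ) = Rlin (S Φ) := rfl
    rw [this, hRapp, hproj', hsymm]
end

section
/- Let n ≥ 1, let E be an n×n complex positive semidefinite matrix with I - E also positive semidefinite, let Q be a nonzero subspace of ℂⁿ (with the standard inner product), and let λ = inf{⟨Φ, EΦ⟩ : Φ ∈ Q, ‖Φ‖ = 1}. If R : ℂⁿ → ℂⁿ is a linear map with operator norm ‖R‖ ≤ 1 and c ∈ ℂ is such that R(√E · Φ) = c · Φ for every Φ ∈ Q, then |c|² ≤ λ. -/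
open scoped ComplexOrder

/-- Koashi–Ueda measurement reversal (optimality part): no contraction `R`
reversing the measurement `Φ ↦ √E·Φ` on the subspace `Q` can succeed with joint
probability `|c|²` exceeding `λ = inf {⟨Φ, EΦ⟩ : Φ ∈ Q, ‖Φ‖ = 1}`. -/
theorem koashi_ueda_reversal_optimal (n : ℕ) (hn : 1 ≤ n)
    (E : Matrix (Fin n) (Fin n) ℂ) (hE : E.PosSemidef) (hIE : (1 - E).PosSemidef)
    (Q : Submodule ℂ (EuclideanSpace ℂ (Fin n))) (hQ : Q ≠ ⊥)
    (lam : ℝ)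
    (hlam : lam = sInf {r : ℝ | ∃ Φ ∈ Q, ‖Φ‖ = 1 ∧
      ((inner ℂ Φ (Matrix.toEuclideanLin E Φ) : ℂ)).re = r})
    (R : EuclideanSpace ℂ (Fin n) →L[ℂ] EuclideanSpace ℂ (Fin n)) (hR : ‖R‖ ≤ 1)
    (c : ℂ) (hc : ∀ Φ ∈ Q, R (Matrix.toEuclideanLin
      ((hE.1.eigenvectorUnitary : Matrix (Fin n) (Fin n) ℂ) *
        Matrix.diagonal ((↑) ∘ Real.sqrt ∘ hE.1.eigenvalues) *
        (star hE.1.eigenvectorUnitary : Matrix (Fin n) (Fin n) ℂ)) Φ) = c • Φ) :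
    ‖c‖ ^ 2 ≤ lam := by
  set S : Matrix (Fin n) (Fin n) ℂ := (hE.1.eigenvectorUnitary : Matrix (Fin n) (Fin n) ℂ) *
        Matrix.diagonal ((↑) ∘ Real.sqrt ∘ hE.1.eigenvalues) *
        (star hE.1.eigenvectorUnitary : Matrix (Fin n) (Fin n) ℂ) with hS
  have hsq : S * S = E := by
    conv_rhs => rw [hE.1.spectral_theorem, Unitary.conjStarAlgAut_apply]
    rw [hS]
    calc _ = (hE.1.eigenvectorUnitary : Matrix (Fin n) (Fin n) ℂ) *
        (Matrix.diagonal (Complex.ofReal ∘ Real.sqrt ∘ hE.1.eigenvalues) *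
        ((star hE.1.eigenvectorUnitary : Matrix (Fin n) (Fin n) ℂ) * hE.1.eigenvectorUnitary) *
        Matrix.diagonal (Complex.ofReal ∘ Real.sqrt ∘ hE.1.eigenvalues)) *
        (star hE.1.eigenvectorUnitary : Matrix (Fin n) (Fin n) ℂ) := by
          simp only [Matrix.mul_assoc]
      _ = _ := by
        rw [Unitary.coe_star_mul_self, Matrix.mul_one, Matrix.diagonal_mul_diagonal]
        congr 3
        funext i
        simp only [Function.comp_apply, ← Complex.ofReal_mul,
          Real.mul_self_sqrt (hE.eigenvalues_nonneg i)]
        rfl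
  -- The inner product identity: ⟨√EΦ, √EΦ⟩ = ⟨Φ, EΦ⟩
  have hherm : S.conjTranspose = S := by
    rw [hS, Matrix.conjTranspose_mul, Matrix.conjTranspose_mul, Matrix.diagonal_conjTranspose,
      ← Matrix.star_eq_conjTranspose, ← Matrix.star_eq_conjTranspose, star_star, Matrix.mul_assoc]
    congr 3
    funext i
    simp
  have key : ∀ Φ : EuclideanSpace ℂ (Fin n),
      (inner ℂ (Matrix.toEuclideanLin S Φ) (Matrix.toEuclideanLin S Φ) : ℂ)
        = inner ℂ Φ (Matrix.toEuclideanLin E Φ) := by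
    intro Φ
    have hadj := Matrix.toEuclideanLin_conjTranspose_eq_adjoint S
    rw [hherm] at hadj
    have := LinearMap.adjoint_inner_right (Matrix.toEuclideanLin S) Φ
      (Matrix.toEuclideanLin S Φ)
    rw [← this, ← hadj]
    congr 1
    have : Matrix.toEuclideanLin S (Matrix.toEuclideanLin S Φ)
        = Matrix.toEuclideanLin (S * S) Φ := by
      simp [Matrix.toEuclideanLin_apply, Matrix.mulVec_mulVec]
    rw [this, hsq]
  -- Main estimate: for unit Φ ∈ Q, ‖c‖² ≤ re⟨Φ, EΦ⟩
  have hbound : ∀ Φ ∈ Q, ‖Φ‖ = 1 →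
      ‖c‖ ^ 2 ≤ ((inner ℂ Φ (Matrix.toEuclideanLin E Φ) : ℂ)).re := by
    intro Φ hΦ hΦ1
    have h1 : ‖c‖ = ‖R (Matrix.toEuclideanLin S Φ)‖ := by
      rw [hc Φ hΦ, norm_smul, hΦ1, mul_one]
    have h2 : ‖R (Matrix.toEuclideanLin S Φ)‖ ≤ ‖Matrix.toEuclideanLin S Φ‖ := by
      calc ‖R (Matrix.toEuclideanLin S Φ)‖
          ≤ ‖R‖ * ‖Matrix.toEuclideanLin S Φ‖ := R.le_opNorm _
        _ ≤ 1 * ‖Matrix.toEuclideanLin S Φ‖ :=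
            mul_le_mul_of_nonneg_right hR (norm_nonneg _)
        _ = _ := one_mul _
    have h3 : ‖Matrix.toEuclideanLin S Φ‖ ^ 2
        = ((inner ℂ Φ (Matrix.toEuclideanLin E Φ) : ℂ)).re := by
      rw [← key Φ]
      rw [← @inner_self_eq_norm_sq ℂ]
      simp [inner_self_eq_norm_sq_to_K]
    rw [← h3]
    have := h1 ▸ h2
    exact pow_le_pow_left₀ (norm_nonneg _) (h1 ▸ h2) 2
  -- The set is nonempty
  obtain ⟨x, hxQ, hx0⟩ := Submodule.exists_mem_ne_zero_of_ne_bot hQ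
  set Φ₀ : EuclideanSpace ℂ (Fin n) := (‖x‖ : ℂ)⁻¹ • x with hΦ₀
  have hΦ₀Q : Φ₀ ∈ Q := Q.smul_mem _ hxQ
  have hΦ₀1 : ‖Φ₀‖ = 1 := by
    rw [hΦ₀, norm_smul, norm_inv, Complex.norm_real, norm_norm,
      inv_mul_cancel₀ (norm_ne_zero_iff.mpr hx0)]
  have hne : {r : ℝ | ∃ Φ ∈ Q, ‖Φ‖ = 1 ∧
      ((inner ℂ Φ (Matrix.toEuclideanLin E Φ) : ℂ)).re = r}.Nonempty :=
    ⟨_, Φ₀, hΦ₀Q, hΦ₀1, rfl⟩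
  rw [hlam]
  exact le_csInf hne (by rintro r ⟨Φ, hΦ, h1, rfl⟩; exact hbound Φ hΦ h1)
end
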